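/- Let q be a prime power, let c > 1 be a real number, and let P ⊆ F_q^2 with |P| ≥ c·q. Then the number of affine lines in F_q^2 containing at most one point of P is at most q^2·c/(c - 1)^2. -/

import Mathlib

open Finset
open scoped Classical

/-- An affine line in the plane `F²`. -/
def IsAffLine {F : Type*} [Field F] (L : Set (F × F)) : Prop :=
  ∃ x v : F × F, v ≠ 0 ∧ L = {y | ∃ t : F, y = x + t • v}

section AuxGeometry

variable {F : Type*} [Field F]

/-- Explicit parametrization of all affine lines: `inl (m, b)` is the line
`y = m·x + b`, and `inr a` is the vertical line `x = a`. -/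
def lineOf : (F × F) ⊕ F → Set (F × F)
  | .inl mb => {p | p.2 = mb.1 * p.1 + mb.2}
  | .inr a => {p | p.1 = a}

lemma isAffLine_lineOf (i : (F × F) ⊕ F) : IsAffLine (lineOf i) := by
  cases i with
  | inl mb =>
    refine ⟨(0, mb.2), (1, mb.1), by simp [Prod.ext_iff], ?_⟩
    ext p
    simp only [lineOf, Set.mem_setOf_eq, Prod.ext_iff, Prod.smul_mk, Prod.mk_add_mk,
      Prod.fst_add, Prod.snd_add, smul_eq_mul]
    constructor
    · intro h
      exact ⟨p.1, by simp, by rw [h]; ring⟩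
    · rintro ⟨t, h1, h2⟩
      rw [h1, h2]; ring
  | inr a =>
    refine ⟨(a, 0), (0, 1), by simp [Prod.ext_iff], ?_⟩
    ext p
    simp only [lineOf, Set.mem_setOf_eq, Prod.ext_iff, Prod.smul_mk, Prod.mk_add_mk,
      smul_eq_mul]
    constructor
    · intro h
      exact ⟨p.2, by simp [h]⟩
    · rintro ⟨t, h1, h2⟩
      simp [h1]

lemma exists_lineOf {L : Set (F × F)} (h : IsAffLine L) : ∃ i, L = lineOf i := by
  obtain ⟨x, v, hv, rfl⟩ := h
  by_cases h1 : v.1 = 0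
  · have h2 : v.2 ≠ 0 := fun h2 => hv (Prod.ext h1 h2)
    refine ⟨.inr x.1, ?_⟩
    ext p
    simp only [lineOf, Set.mem_setOf_eq, Prod.ext_iff, Prod.fst_add, Prod.snd_add,
      Prod.smul_fst, Prod.smul_snd, smul_eq_mul]
    constructor
    · rintro ⟨t, hp1, hp2⟩; simp [hp1, h1]
    · intro hp
      exact ⟨(p.2 - x.2) / v.2, by simp [hp, h1], by field_simp; ring⟩
  · refine ⟨.inl (v.2 / v.1, x.2 - v.2 / v.1 * x.1), ?_⟩
    ext p
    simp only [lineOf, Set.mem_setOf_eq, Prod.ext_iff, Prod.fst_add, Prod.snd_add,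
      Prod.smul_fst, Prod.smul_snd, smul_eq_mul]
    constructor
    · rintro ⟨t, hp1, hp2⟩
      rw [hp1, hp2]
      field_simp
      ring
    · intro hp
      refine ⟨(p.1 - x.1) / v.1, by field_simp; ring, ?_⟩
      rw [hp]
      field_simp
      ring

lemma lineOf_inj : Function.Injective (lineOf (F := F)) := by
  intro i j hij
  have key : ∀ p : F × F, p ∈ lineOf i ↔ p ∈ lineOf j := fun p => by rw [hij]
  cases i with
  | inl mb =>
    cases j with
    | inl mb' =>
      have h0 := (key (0, mb.2)).mp (by simp [lineOf])
      simp only [lineOf, Set.mem_setOf_eq, mul_zero, zero_add] at h0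
      have h1 := (key (1, mb.1 + mb.2)).mp (by simp [lineOf])
      simp only [lineOf, Set.mem_setOf_eq, mul_one] at h1
      have : mb.1 = mb'.1 := by rw [h0] at h1; exact add_right_cancel h1
      simp [Prod.ext_iff, this, ← h0]
    | inr a =>
      have h0 := (key (a, 0)).mpr (by simp [lineOf])
      have h1 := (key (a, 1)).mpr (by simp [lineOf])
      simp only [lineOf, Set.mem_setOf_eq] at h0 h1
      exact absurd (h0.trans h1.symm) (by simp)
  | inr a =>
    cases j with
    | inl mb =>
      have h0 := (key (a, 0)).mp (by simp [lineOf])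
      have h1 := (key (a, 1)).mp (by simp [lineOf])
      simp only [lineOf, Set.mem_setOf_eq] at h0 h1
      exact absurd (h0.trans h1.symm) (by simp)
    | inr a' =>
      have h0 := (key (a, 0)).mp (by simp [lineOf])
      simp only [lineOf, Set.mem_setOf_eq] at h0
      simp [h0]

lemma card_lines_through [Fintype F] (x : F × F) :
    (univ.filter fun i : (F × F) ⊕ F => x ∈ lineOf i).card = Fintype.card F + 1 := by
  have hset : (univ.filter fun i : (F × F) ⊕ F => x ∈ lineOf i) =
      insert (Sum.inr x.1) ((univ : Finset F).image fun m => Sum.inl (m, x.2 - m * x.1)) := by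
    ext i
    cases i with
    | inl mb =>
      simp only [mem_filter, mem_univ, true_and, mem_insert, mem_image]
      simp only [lineOf, Set.mem_setOf_eq]
      constructor
      · intro h
        exact Or.inr ⟨mb.1, congrArg Sum.inl (Prod.ext rfl (by rw [h]; ring))⟩
      · rintro (h | ⟨m, h⟩)
        · exact absurd h (by simp)
        · injection h with h
          subst h
          simp only
          ring
    | inr a =>
      simp only [mem_filter, mem_univ, true_and, mem_insert, mem_image]
      simp only [lineOf, Set.mem_setOf_eq]
      constructor
      · intro h
        exact Or.inl (by rw [h])
      · rintro (h | ⟨m, h⟩)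
        · injection h with h
          exact h.symm
        · exact absurd h (by simp)
  rw [hset, card_insert_of_notMem (by simp), card_image_of_injective _
    (fun a b hab => by simp only [Sum.inl.injEq, Prod.mk.injEq] at hab; exact hab.1), card_univ]

lemma pair_unique_line {x y : F × F} (hxy : x ≠ y) :
    ∃! i : (F × F) ⊕ F, x ∈ lineOf i ∧ y ∈ lineOf i := by
  by_cases h1 : x.1 = y.1
  · refine ⟨.inr x.1, ⟨rfl, h1.symm⟩, ?_⟩
    rintro (mb | a) ⟨hx, hy⟩
    · exfalso
      simp only [lineOf, Set.mem_setOf_eq] at hx hy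
      apply hxy
      have : x.2 = y.2 := by rw [hx, hy, h1]
      exact Prod.ext h1 this
    · simp only [lineOf, Set.mem_setOf_eq] at hx
      rw [hx]
  · refine ⟨.inl ((x.2 - y.2) / (x.1 - y.1), x.2 - (x.2 - y.2) / (x.1 - y.1) * x.1),
      ⟨by simp only [lineOf, Set.mem_setOf_eq]; ring, ?_⟩, ?_⟩
    · simp only [lineOf, Set.mem_setOf_eq]
      have hd : x.1 - y.1 ≠ 0 := sub_ne_zero.mpr h1
      field_simp
      ring
    · rintro (mb | a) ⟨hx, hy⟩
      · simp only [lineOf, Set.mem_setOf_eq] at hx hy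
        have hd : x.1 - y.1 ≠ 0 := sub_ne_zero.mpr h1
        have hm : mb.1 = (x.2 - y.2) / (x.1 - y.1) := by
          field_simp
          rw [hx, hy]; ring
        have hb : mb.2 = x.2 - (x.2 - y.2) / (x.1 - y.1) * x.1 := by
          rw [← hm, hx]; ring
        rw [← hm] at hb ⊢
        rw [← hb]
      · simp only [lineOf, Set.mem_setOf_eq] at hx hy
        exact absurd (hx.trans hy.symm) h1

end AuxGeometry

/-- The purely real-arithmetic final bound. -/
lemma final_real_bound (q N c K : ℝ) (hq : 2 ≤ q) (hc : 1 < c) (hcq : c * q ≤ N)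
    (hN2 : N ≤ q ^ 2) (hK : 0 ≤ K) (h : K * (N - q) ^ 2 ≤ q * N * (q ^ 2 - N)) :
    K ≤ q ^ 2 * c / (c - 1) ^ 2 := by
  have hq0 : 0 < q := by linarith
  have haq : q < c * q := by nlinarith
  have hNq : q < N := lt_of_lt_of_le haq hcq
  -- monotonicity step
  have t1 : (0:ℝ) ≤ (N - c*q) * ((c*q - q) * q * ((q-2)*(c*q) + q^2)) := by
    apply mul_nonneg (by linarith)
    apply mul_nonneg (mul_nonneg (by linarith) hq0.le)
    nlinarith
  have t2 : (0:ℝ) ≤ (N - c*q)^2 * ((c*q)*q*(q-2) + q^2) := by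
    apply mul_nonneg (sq_nonneg _)
    nlinarith
  have mono : N * (q^2 - N) * (c*q - q)^2 ≤ (c*q) * (q^2 - c*q) * (N - q)^2 := by
    nlinarith [t1, t2]
  have h4 := mul_le_mul_of_nonneg_right h (sq_nonneg (c*q - q))
  have h5 := mul_le_mul_of_nonneg_left mono hq0.le
  have h3 : K * (c*q - q)^2 * (N - q)^2 ≤ q * ((c*q) * (q^2 - c*q)) * (N - q)^2 := by
    nlinarith [h4, h5]
  have hNqpos : 0 < (N - q)^2 := pow_pos (by linarith) 2
  have step2 : K * (c*q - q)^2 ≤ q * ((c*q) * (q^2 - c*q)) :=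
    le_of_mul_le_mul_right (by nlinarith [h3]) hNqpos
  have hc1 : (0:ℝ) < (c - 1)^2 := pow_pos (by linarith) 2
  rw [le_div_iff₀ hc1]
  -- K (c-1)² q² = K (cq - q)² ≤ q·cq(q²-cq) ≤ c q⁴
  have hcq0 : 0 ≤ c * q := by nlinarith
  nlinarith [step2, mul_pos hq0 hq0, mul_nonneg (mul_nonneg hcq0 hq0.le) (mul_nonneg hcq0 hq0.le)]

set_option maxHeartbeats 1000000 in
/-- If `P ⊆ 𝔽_q²` has `|P| ≥ c·q` for some real `c > 1`, then the number of affine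
lines containing at most one point of `P` is at most `q²·c/(c-1)²`. -/
theorem few_undetermined_lines (p e q : ℕ) (hp : p.Prime) (he : 0 < e) (hq : q = p ^ e)
    {F : Type*} [Field F] [Fintype F] (hF : Fintype.card F = q)
    (c : ℝ) (hc : 1 < c) (P : Set (F × F)) (hP : (P.ncard : ℝ) ≥ c * q) :
    (({L : Set (F × F) | IsAffLine L ∧ (P ∩ L).ncard ≤ 1}.ncard : ℝ)) ≤
      (q : ℝ) ^ 2 * c / (c - 1) ^ 2 := by
  have hq2 : 2 ≤ q := hF ▸ Fintype.one_lt_card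
  set Pf : Finset (F × F) := (Set.toFinite P).toFinset with hPfdef
  have hPmem : ∀ z, z ∈ Pf ↔ z ∈ P := fun z => Set.Finite.mem_toFinset _
  set N : ℕ := Pf.card with hNdef
  have hNP : P.ncard = N := Set.ncard_eq_toFinset_card P (Set.toFinite P)
  set n : (F × F) ⊕ F → ℕ := fun i => (Pf.filter (· ∈ lineOf i)).card with hndef
  -- intersection cardinality
  have hinter : ∀ i, (P ∩ lineOf i).ncard = n i := by
    intro i
    have : P ∩ lineOf i = ↑(Pf.filter (· ∈ lineOf i)) := by
      ext z
      simp [hPmem z, Set.mem_inter_iff]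
    rw [this, Set.ncard_coe_finset]
  -- first moment
  have hA : ∑ i, n i = N * (q + 1) := by
    have : ∀ i, n i = ∑ x ∈ Pf, if x ∈ lineOf i then 1 else 0 := fun i => card_filter _ _
    simp_rw [this]
    rw [Finset.sum_comm]
    have hx : ∀ x : F × F, ∑ i : (F × F) ⊕ F, (if x ∈ lineOf i then 1 else 0) = q + 1 := by
      intro x
      rw [← card_filter]
      rw [card_lines_through x, hF]
    simp_rw [hx]
    rw [sum_const, smul_eq_mul]
  -- second moment via off-diagonal pairs
  have hB : ∑ i, (n i * n i - n i) = N * N - N := by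
    have hoff : ∀ i, n i * n i - n i = (Pf.offDiag.filter
        (fun z => z.1 ∈ lineOf i ∧ z.2 ∈ lineOf i)).card := by
      intro i
      rw [← Finset.offDiag_card]
      congr 1
      ext z
      simp only [mem_offDiag, mem_filter]
      tauto
    simp_rw [hoff]
    have : ∀ i, (Pf.offDiag.filter (fun z => z.1 ∈ lineOf i ∧ z.2 ∈ lineOf i)).card
        = ∑ z ∈ Pf.offDiag, if z.1 ∈ lineOf i ∧ z.2 ∈ lineOf i then 1 else 0 :=
      fun i => card_filter _ _
    simp_rw [this]
    rw [Finset.sum_comm]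
    have hz : ∀ z ∈ Pf.offDiag,
        ∑ i : (F × F) ⊕ F, (if z.1 ∈ lineOf i ∧ z.2 ∈ lineOf i then 1 else 0) = 1 := by
      intro z hz
      rw [← card_filter]
      obtain ⟨-, -, hne⟩ := mem_offDiag.mp hz
      obtain ⟨i₀, hi₀, huniq⟩ := pair_unique_line hne
      rw [card_eq_one]
      refine ⟨i₀, ?_⟩
      ext j
      simp only [mem_filter, mem_univ, true_and, mem_singleton]
      exact ⟨fun h => huniq j h, fun h => h ▸ hi₀⟩
    rw [Finset.sum_congr rfl hz, sum_const, smul_eq_mul, mul_one, Finset.offDiag_card]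
  -- pass to integers
  have hle : ∀ m : ℕ, m ≤ m * m := by
    intro m
    cases m with
    | zero => simp
    | succ k => exact Nat.le_mul_of_pos_left _ (Nat.succ_pos k)
  have hAZ : ∑ i, (n i : ℤ) = (N : ℤ) * ((q : ℤ) + 1) := by exact_mod_cast hA
  have hBZ : ∑ i, ((n i : ℤ) * n i - n i) = (N : ℤ) * N - N := by
    have e0 : ∀ i ∈ univ, ((n i : ℤ) * n i - n i) = ((n i * n i - n i : ℕ) : ℤ) := by
      intro i _
      rw [Nat.cast_sub (hle _)]
      push_cast
      ring
    rw [Finset.sum_congr rfl e0, ← Nat.cast_sum, hB, Nat.cast_sub (hle _)]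
    push_cast
    ring
  have hcards : Fintype.card ((F × F) ⊕ F) = q * q + q := by
    simp [Fintype.card_sum, Fintype.card_prod, hF]
  -- second-moment identity
  have hsq : ∑ i, ((n i : ℤ) * q - N) ^ 2 = (q : ℤ) * N * ((q : ℤ) ^ 2 - N) := by
    have e1 : ∀ i ∈ univ, ((n i : ℤ) * q - N) ^ 2
        = (q : ℤ) ^ 2 * ((n i : ℤ) * n i - n i) + ((q : ℤ) ^ 2 - 2 * q * N) * (n i : ℤ)
          + (N : ℤ) ^ 2 := by
      intro i _
      ring
    rw [Finset.sum_congr rfl e1, Finset.sum_add_distrib, Finset.sum_add_distrib,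
      ← Finset.mul_sum, ← Finset.mul_sum, hBZ, hAZ, Finset.sum_const, card_univ, hcards,
      nsmul_eq_mul]
    push_cast
    ring
  -- the undetermined lines
  set T : Finset ((F × F) ⊕ F) := univ.filter (fun i => n i ≤ 1) with hT
  have hKcard : {L : Set (F × F) | IsAffLine L ∧ (P ∩ L).ncard ≤ 1}.ncard = T.card := by
    have himg : {L : Set (F × F) | IsAffLine L ∧ (P ∩ L).ncard ≤ 1}
        = lineOf '' (↑T : Set ((F × F) ⊕ F)) := by
      ext L
      simp only [Set.mem_setOf_eq, Set.mem_image, mem_coe, mem_filter, mem_univ, true_and, hT]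
      constructor
      · rintro ⟨hL, hn⟩
        obtain ⟨i, rfl⟩ := exists_lineOf hL
        exact ⟨i, by rwa [hinter i] at hn, rfl⟩
      · rintro ⟨i, hi, rfl⟩
        exact ⟨isAffLine_lineOf i, by rw [hinter i]; exact hi⟩
    rw [himg, Set.ncard_image_of_injective _ lineOf_inj, Set.ncard_coe_finset]
  have hq0R : (0:ℝ) < q := by
    have : 0 < q := by omega
    exact_mod_cast this
  have hNq : q < N := by
    have hr : (q : ℝ) < N := by
      calc (q : ℝ) = 1 * q := (one_mul _).symm
      _ < c * q := by exact mul_lt_mul_of_pos_right hc hq0R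
      _ ≤ N := by rw [hNP] at hP; exact hP
    exact_mod_cast hr
  have hN2 : N ≤ q * q := by
    calc N ≤ Fintype.card (F × F) := Finset.card_le_univ Pf
    _ = q * q := by simp [Fintype.card_prod, hF]
  -- the key integer inequality
  have hTcard : (T.card : ℤ) * ((N : ℤ) - q) ^ 2 ≤ (q : ℤ) * N * ((q : ℤ) ^ 2 - N) := by
    calc (T.card : ℤ) * ((N : ℤ) - q) ^ 2 = ∑ _i ∈ T, ((N : ℤ) - q) ^ 2 := by
          rw [Finset.sum_const, nsmul_eq_mul]
    _ ≤ ∑ i ∈ T, ((n i : ℤ) * q - N) ^ 2 := by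
        apply Finset.sum_le_sum
        intro i hi
        have hni : (n i : ℤ) ≤ 1 := by exact_mod_cast (mem_filter.mp hi).2
        have hn0 : (0:ℤ) ≤ (n i : ℤ) := Int.natCast_nonneg _
        have hqN : (q : ℤ) < N := by exact_mod_cast hNq
        have hq0 : (0:ℤ) ≤ q := Int.natCast_nonneg _
        have h2 : (n i : ℤ) * q ≤ q := by nlinarith
        have h1 : (0:ℤ) ≤ (N : ℤ) - q := by linarith
        have h3 := pow_le_pow_left₀ h1 (by linarith : (N : ℤ) - q ≤ (N : ℤ) - (n i) * q) 2
        nlinarith [h3]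
    _ ≤ ∑ i, ((n i : ℤ) * q - N) ^ 2 :=
        Finset.sum_le_sum_of_subset_of_nonneg (subset_univ T) (fun i _ _ => sq_nonneg _)
    _ = (q : ℤ) * N * ((q : ℤ) ^ 2 - N) := hsq
  -- conclude over the reals
  rw [hKcard]
  apply final_real_bound (q : ℝ) (N : ℝ) c
  · exact_mod_cast hq2
  · exact hc
  · rw [hNP] at hP; exact hP
  · have : (N : ℝ) ≤ (q : ℝ) * q := by exact_mod_cast hN2
    nlinarith [this]
  · positivity
  · exact_mod_cast hTcard
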